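/- arXiv:2107.04368 — 2 statements merged into one kernel-verified Lean document; each statement's English description precedes it below -/
import Mathlib

section
/- Let G=(W,E) be a simple undirected graph with W={w_1,…,w_{3q}}, let (N,V) be the instance of 3D-SR-AS-BIN constructed from G by the reduction, and let M be a stable matching in (N,V) with |M| = |N|/3. Then for every r with 1 ≤ r ≤ 6q, the five agents p_r^1, p_r^2, p_r^3, p_r^4, p_r^5 belong to exactly two triples of M. -/
open Finset

variable {A : Type*}

/-- `M` is a matching on agent set `N`: a set of pairwise disjoint triples of agents of `N`. -/
def IsMatching [DecidableEq A] (N : Finset A) (M : Finset (Finset A)) : Prop :=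
  (∀ t ∈ M, t.card = 3 ∧ t ⊆ N) ∧ ∀ t ∈ M, ∀ s ∈ M, t ≠ s → Disjoint t s

/-- The (additively separable) utility of agent `a` in matching `M` under valuations `val`:
the sum, over the triples of `M` containing `a`, of the valuations by `a` of the other
members; this is `0` if `a` is unmatched, and for a genuine matching it is the sum of the
valuations of `a`'s two partners. -/
def utility [DecidableEq A] (val : A → A → ℤ) (M : Finset (Finset A)) (a : A) : ℤ :=
  ∑ t ∈ M.filter (fun t => a ∈ t), ∑ b ∈ t.erase a, val a b

/-- The triple consisting of the three distinct agents `x, y, z` of `N` blocks `M`. -/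
def Blocks [DecidableEq A] (N : Finset A) (val : A → A → ℤ) (M : Finset (Finset A))
    (x y z : A) : Prop :=
  x ∈ N ∧ y ∈ N ∧ z ∈ N ∧ x ≠ y ∧ x ≠ z ∧ y ≠ z ∧
  utility val M x < val x y + val x z ∧
  utility val M y < val y x + val y z ∧
  utility val M z < val z x + val z y

/-- `M` is stable: no triple of agents of `N` blocks it. -/
def IsStable [DecidableEq A] (N : Finset A) (val : A → A → ℤ) (M : Finset (Finset A)) : Prop :=
  ∀ x y z : A, ¬ Blocks N val M x y z

/-- Binary symmetric preferences on `N`. -/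
def BinSym [DecidableEq A] (N : Finset A) (val : A → A → ℤ) : Prop :=
  (∀ a ∈ N, ∀ b ∈ N, a ≠ b → val a b = 0 ∨ val a b = 1) ∧
  (∀ a ∈ N, ∀ b ∈ N, val a b = val b a)

/-- A `P`-matching: a matching in which every matched agent has strictly positive utility. -/
def IsPMatching [DecidableEq A] (N : Finset A) (val : A → A → ℤ)
    (M : Finset (Finset A)) : Prop :=
  IsMatching N M ∧ ∀ a : A, (∃ t ∈ M, a ∈ t) → 0 < utility val M a

/-- `x, y, z` form a triangle: three distinct agents of `N` whose pairwise valuations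
all equal `1`. -/
def IsTriangle [DecidableEq A] (N : Finset A) (val : A → A → ℤ) (x y z : A) : Prop :=
  x ∈ N ∧ y ∈ N ∧ z ∈ N ∧ x ≠ y ∧ x ≠ z ∧ y ≠ z ∧
  val x y = 1 ∧ val y z = 1 ∧ val x z = 1

/-- The instance contains no triangle. -/
def TriangleFree [DecidableEq A] (N : Finset A) (val : A → A → ℤ) : Prop :=
  ∀ x y z : A, ¬ IsTriangle N val x y z

open Finset

/-- The agents of the instance constructed by the reduction from
Partition Into Triangles: `a i s` (for `s : Fin 2`), `b i` for each vertex `i`,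
and pentagadget agents `p r t` (`t : Fin 5`, representing `p_r^{t+1}`). -/
inductive Agent (q : ℕ) : Type where
  | a : Fin (3*q) → Fin 2 → Agent q
  | b : Fin (3*q) → Agent q
  | p : Fin (6*q) → Fin 5 → Agent q
  deriving DecidableEq, Fintype

/-- The valuation function of the instance constructed by the reduction from the graph `G`.
Note that, within a pentagadget, `p_r^t` assigns valuation `1` exactly to
`p_r^{t+1}, p_r^{t+2}, p_r^{t+4}` (indices mod 5). -/
def redVal (q : ℕ) (G : SimpleGraph (Fin (3*q))) [DecidableRel G.Adj] :
    Agent q → Agent q → ℤ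
  | .a i s, .a j s' => if i = j ∧ s ≠ s' then 1 else 0
  | .a i _, .b j => if i = j then 1 else 0
  | .b i, .a j _ => if i = j then 1 else 0
  | .b i, .b j => if G.Adj i j then 1 else 0
  | .p r t, .p r' t' => if r = r' ∧ (t' - t = 1 ∨ t' - t = 2 ∨ t' - t = 4) then 1 else 0
  | _, _ => 0

/-- A partition of the vertices of `G` into triangles. -/
def IsTrianglePartition {n : ℕ} (G : SimpleGraph (Fin n))
    (X : Finset (Finset (Fin n))) : Prop :=
  (∀ t ∈ X, t.card = 3 ∧ ∀ u ∈ t, ∀ v ∈ t, u ≠ v → G.Adj u v) ∧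
  (∀ t ∈ X, ∀ s ∈ X, t ≠ s → Disjoint t s) ∧
  ∀ v : Fin n, ∃ t ∈ X, v ∈ t



/-! ### Auxiliary machinery -/

set_option maxRecDepth 20000 in
set_option maxHeartbeats 2000000 in
lemma pure5x : ∀ c0 c1 c2 c3 c4 : Fin 5,
    ((if c0 = c0 then 1 else 0) + (if c1 = c0 then 1 else 0) + (if c2 = c0 then 1 else 0) + (if c3 = c0 then 1 else 0) + (if c4 = c0 then 1 else 0) ≤ 3) →
    ((if c0 = c1 then 1 else 0) + (if c1 = c1 then 1 else 0) + (if c2 = c1 then 1 else 0) + (if c3 = c1 then 1 else 0) + (if c4 = c1 then 1 else 0) ≤ 3) →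
    ((if c0 = c2 then 1 else 0) + (if c1 = c2 then 1 else 0) + (if c2 = c2 then 1 else 0) + (if c3 = c2 then 1 else 0) + (if c4 = c2 then 1 else 0) ≤ 3) →
    ((if c0 = c3 then 1 else 0) + (if c1 = c3 then 1 else 0) + (if c2 = c3 then 1 else 0) + (if c3 = c3 then 1 else 0) + (if c4 = c3 then 1 else 0) ≤ 3) →
    ((if c0 = c4 then 1 else 0) + (if c1 = c4 then 1 else 0) + (if c2 = c4 then 1 else 0) + (if c3 = c4 then 1 else 0) + (if c4 = c4 then 1 else 0) ≤ 3) →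
    (¬ (((if c1 = c0 then 1 else 0) + ((if c2 = c0 then 1 else 0) + (if c4 = c0 then 1 else 0))) < 2 ∧ ((if c2 = c1 then 1 else 0) + ((if c3 = c1 then 1 else 0) + (if c0 = c1 then 1 else 0))) < 2 ∧ ((if c3 = c2 then 1 else 0) + ((if c4 = c2 then 1 else 0) + (if c1 = c2 then 1 else 0))) < 1)) →
    (¬ (((if c2 = c1 then 1 else 0) + ((if c3 = c1 then 1 else 0) + (if c0 = c1 then 1 else 0))) < 2 ∧ ((if c3 = c2 then 1 else 0) + ((if c4 = c2 then 1 else 0) + (if c1 = c2 then 1 else 0))) < 2 ∧ ((if c4 = c3 then 1 else 0) + ((if c0 = c3 then 1 else 0) + (if c2 = c3 then 1 else 0))) < 1)) →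
    (¬ (((if c3 = c2 then 1 else 0) + ((if c4 = c2 then 1 else 0) + (if c1 = c2 then 1 else 0))) < 2 ∧ ((if c4 = c3 then 1 else 0) + ((if c0 = c3 then 1 else 0) + (if c2 = c3 then 1 else 0))) < 2 ∧ ((if c0 = c4 then 1 else 0) + ((if c1 = c4 then 1 else 0) + (if c3 = c4 then 1 else 0))) < 1)) →
    (¬ (((if c4 = c3 then 1 else 0) + ((if c0 = c3 then 1 else 0) + (if c2 = c3 then 1 else 0))) < 2 ∧ ((if c0 = c4 then 1 else 0) + ((if c1 = c4 then 1 else 0) + (if c3 = c4 then 1 else 0))) < 2 ∧ ((if c1 = c0 then 1 else 0) + ((if c2 = c0 then 1 else 0) + (if c4 = c0 then 1 else 0))) < 1)) →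
    (¬ (((if c0 = c4 then 1 else 0) + ((if c1 = c4 then 1 else 0) + (if c3 = c4 then 1 else 0))) < 2 ∧ ((if c1 = c0 then 1 else 0) + ((if c2 = c0 then 1 else 0) + (if c4 = c0 then 1 else 0))) < 2 ∧ ((if c2 = c1 then 1 else 0) + ((if c3 = c1 then 1 else 0) + (if c0 = c1 then 1 else 0))) < 1)) →
    ({c0,c1,c2,c3,c4} : Finset (Fin 5)).card = 2 := by decide


def agentEquiv (q : ℕ) : Agent q ≃ ((Fin (3*q) × Fin 2) ⊕ (Fin (3*q) ⊕ (Fin (6*q) × Fin 5))) where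
  toFun x := match x with
    | .a i s => .inl (i, s)
    | .b i => .inr (.inl i)
    | .p r t => .inr (.inr (r, t))
  invFun x := match x with
    | .inl (i, s) => .a i s
    | .inr (.inl i) => .b i
    | .inr (.inr (r, t)) => .p r t
  left_inv x := by cases x <;> rfl
  right_inv x := by rcases x with ⟨i, s⟩ | i | ⟨r, t⟩ <;> rfl

lemma card_agent (q : ℕ) : Fintype.card (Agent q) = 39 * q := by
  rw [Fintype.card_congr (agentEquiv q)]
  simp [Fintype.card_sum, Fintype.card_prod]
  ring

/-- picks the least index of a pentagadget-`r` agent in a triple. -/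
def classIdx (q : ℕ) (r : Fin (6*q)) (t : Finset (Agent q)) : Fin 5 :=
  if Agent.p r 0 ∈ t then 0 else if Agent.p r 1 ∈ t then 1 else if Agent.p r 2 ∈ t then 2
  else if Agent.p r 3 ∈ t then 3 else 4

lemma classIdx_mem {q : ℕ} {r : Fin (6*q)} {t : Finset (Agent q)}
    (h : ∃ s : Fin 5, Agent.p r s ∈ t) : Agent.p r (classIdx q r t) ∈ t := by
  obtain ⟨s, hs⟩ := h
  unfold classIdx
  split_ifs with h0 h1 h2 h3
  · exact h0
  · exact h1
  · exact h2
  · exact h3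
  · fin_cases s
    · exact absurd hs h0
    · exact absurd hs h1
    · exact absurd hs h2
    · exact absurd hs h3
    · exact hs

lemma F1 : ∀ s : Fin 5, s + 1 - s = 1 ∧ s + 2 - s = 2 ∧ s - (s+1) = 4 ∧ s + 2 - (s+1) = 1 ∧
    s - (s+2) = 3 ∧ s + 1 - (s+2) = 4 := by decide

lemma F2 : ∀ s : Fin 5, s + 1 ≠ s ∧ s + 2 ≠ s ∧ s + 4 ≠ s ∧ s + 1 ≠ s + 2 ∧ s + 1 ≠ s + 4 ∧
    s + 2 ≠ s + 4 := by decide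

lemma F3 : ∀ s t : Fin 5, (t - s = 1 ∨ t - s = 2 ∨ t - s = 4) ↔
    (t = s + 1 ∨ t = s + 2 ∨ t = s + 4) := by decide

lemma F4 : ∀ s : Fin 5, s ≠ s + 1 ∧ s ≠ s + 2 ∧ s + 1 ≠ s + 2 := by decide

/-- In any stable matching of the reduced instance in which every agent is matched, the five
agents of the `r`-th pentagadget belong to exactly two triples. -/
theorem pentagadget_in_two_triples
    (q : ℕ) (G : SimpleGraph (Fin (3*q))) [DecidableRel G.Adj]
    (M : Finset (Finset (Agent q)))
    (hM : IsMatching (Finset.univ : Finset (Agent q)) M)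
    (hstable : IsStable Finset.univ (redVal q G) M)
    (hcard : M.card = 13 * q) (r : Fin (6*q)) :
    (M.filter (fun t => ∃ s : Fin 5, Agent.p r s ∈ t)).card = 2 := by
  classical
  obtain ⟨hMt, hMdisj⟩ := hM
  -- every pair of triples sharing an element is equal
  have huniq : ∀ t ∈ M, ∀ t' ∈ M, ∀ x : Agent q, x ∈ t → x ∈ t' → t = t' := by
    intro t ht t' ht' x hx hx'
    by_contra hne
    exact (Finset.disjoint_left.mp (hMdisj t ht t' ht' hne) hx) hx'
  -- every agent is matched
  have hcover : ∀ x : Agent q, ∃ t ∈ M, x ∈ t := by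
    have h1 : M.biUnion (fun t => t) = Finset.univ := by
      apply Finset.eq_univ_of_card
      rw [Finset.card_biUnion (fun t ht s hs hne => hMdisj t ht s hs hne)]
      have h2 : ∀ t ∈ M, t.card = 3 := fun t ht => (hMt t ht).1
      rw [Finset.sum_congr rfl h2, Finset.sum_const, hcard, card_agent, smul_eq_mul]
      ring
    intro x
    have hx : x ∈ M.biUnion id := h1 ▸ Finset.mem_univ x
    simpa using Finset.mem_biUnion.mp hx
  choose T hTM hTmem using fun s : Fin 5 => hcover (Agent.p r s)
  set c : Fin 5 → Fin 5 := fun s => classIdx q r (T s) with hcdef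
  have hpinj : Function.Injective (Agent.p r) := by
    intro a b h
    injection h with h1 h2
  have hTeq : ∀ s s' : Fin 5, c s' = c s ↔ T s' = T s := by
    intro s s'
    constructor
    · intro h
      have h1 : Agent.p r (classIdx q r (T s)) ∈ T s := classIdx_mem ⟨s, hTmem s⟩
      have h2 : Agent.p r (classIdx q r (T s')) ∈ T s' := classIdx_mem ⟨s', hTmem s'⟩
      have h2' : Agent.p r (classIdx q r (T s)) ∈ T s' := by
        have : classIdx q r (T s') = classIdx q r (T s) := h
        rwa [this] at h2
      exact huniq _ (hTM s') _ (hTM s) _ h2' h1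
    · intro h
      simp only [hcdef, h]
  have hmem : ∀ s s' : Fin 5, (Agent.p r s' ∈ T s ↔ c s' = c s) := by
    intro s s'
    constructor
    · intro h
      exact (hTeq s s').mpr (huniq _ (hTM s') _ (hTM s) _ (hTmem s') h)
    · intro h
      have := (hTeq s s').mp h
      rw [← this]
      exact hTmem s'
  have hfs : ∀ s : Fin 5, M.filter (fun t => Agent.p r s ∈ t) = {T s} := by
    intro s
    ext t
    simp only [Finset.mem_filter, Finset.mem_singleton]
    constructor
    · rintro ⟨ht, hmemt⟩
      exact huniq _ ht _ (hTM s) _ hmemt (hTmem s)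
    · rintro rfl
      exact ⟨hTM s, hTmem s⟩
  -- utility computation
  have hutilN : ∀ s : Fin 5, utility (redVal q G) M (Agent.p r s) =
      ((((if c (s+1) = c s then 1 else 0) + ((if c (s+2) = c s then 1 else 0) +
        (if c (s+4) = c s then 1 else 0))) : ℕ) : ℤ) := by
    intro s
    have hD1 : (s+1 : Fin 5) ∉ ({s+2, s+4} : Finset (Fin 5)) := by
      simp [(F2 s).2.2.2.1, (F2 s).2.2.2.2.1]
    have hD2 : (s+2 : Fin 5) ∉ ({s+4} : Finset (Fin 5)) := by
      simp [(F2 s).2.2.2.2.2]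
    set D : Finset (Fin 5) := {s+1, s+2, s+4} with hDdef
    set X : Finset (Agent q) := (D.filter (fun s' => c s' = c s)).image (Agent.p r) with hXdef
    have hXsub : X ⊆ (T s).erase (Agent.p r s) := by
      intro b hb
      rw [hXdef, Finset.mem_image] at hb
      obtain ⟨s', hs', rfl⟩ := hb
      rw [Finset.mem_filter] at hs'
      refine Finset.mem_erase.mpr ⟨hpinj.ne ?_, (hmem s s').mpr hs'.2⟩
      have hd : s' = s + 1 ∨ s' = s + 2 ∨ s' = s + 4 := by
        simpa [hDdef] using hs'.1
      rcases hd with rfl | rfl | rfl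
      · exact (F2 s).1
      · exact (F2 s).2.1
      · exact (F2 s).2.2.1
    have hval : ∀ b ∈ (T s).erase (Agent.p r s),
        redVal q G (Agent.p r s) b = if b ∈ X then 1 else 0 := by
      intro b hb
      obtain ⟨hbne, hbT⟩ := Finset.mem_erase.mp hb
      cases b with
      | a i u =>
        have hnX : Agent.a i u ∉ X := by
          rw [hXdef]
          intro hX
          obtain ⟨s', _, heq⟩ := Finset.mem_image.mp hX
          exact absurd heq (by simp)
        rw [if_neg hnX]
        rfl
      | b i =>
        have hnX : Agent.b i ∉ X := by
          rw [hXdef]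
          intro hX
          obtain ⟨s', _, heq⟩ := Finset.mem_image.mp hX
          exact absurd heq (by simp)
        rw [if_neg hnX]
        rfl
      | p r'' t'' =>
        by_cases hr : r = r''
        · subst hr
          have hct : c t'' = c s := (hmem s t'').mp hbT
          by_cases hcond : t'' - s = 1 ∨ t'' - s = 2 ∨ t'' - s = 4
          · have hDmem : t'' ∈ D := by
              rcases (F3 s t'').mp hcond with h | h | h <;> simp [hDdef, h]
            have hX : Agent.p r t'' ∈ X := by
              rw [hXdef]
              exact Finset.mem_image.mpr ⟨t'', Finset.mem_filter.mpr ⟨hDmem, hct⟩, rfl⟩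
            rw [if_pos hX]
            show (if r = r ∧ (t'' - s = 1 ∨ t'' - s = 2 ∨ t'' - s = 4) then (1:ℤ) else 0) = 1
            rw [if_pos ⟨rfl, hcond⟩]
          · have hnX : Agent.p r t'' ∉ X := by
              rw [hXdef]
              intro hX
              obtain ⟨s', hs', heq⟩ := Finset.mem_image.mp hX
              have hst : s' = t'' := hpinj heq
              subst hst
              have : s' ∈ D := (Finset.mem_filter.mp hs').1
              exact hcond ((F3 s s').mpr (by simpa [hDdef] using this))
            rw [if_neg hnX]
            show (if r = r ∧ (t'' - s = 1 ∨ t'' - s = 2 ∨ t'' - s = 4) then (1:ℤ) else 0) = 0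
            exact if_neg (fun h => hcond h.2)
        · have hnX : Agent.p r'' t'' ∉ X := by
            rw [hXdef]
            intro hX
            obtain ⟨s', _, heq⟩ := Finset.mem_image.mp hX
            injection heq with h1 h2
            exact hr h1
          rw [if_neg hnX]
          show (if r = r'' ∧ (t'' - s = 1 ∨ t'' - s = 2 ∨ t'' - s = 4) then (1:ℤ) else 0) = 0
          exact if_neg (fun h => hr h.1)
    calc utility (redVal q G) M (Agent.p r s)
        = ∑ b ∈ (T s).erase (Agent.p r s), redVal q G (Agent.p r s) b := by
          rw [utility, hfs s, Finset.sum_singleton]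
      _ = ∑ b ∈ (T s).erase (Agent.p r s), (if b ∈ X then (1:ℤ) else 0) :=
          Finset.sum_congr rfl hval
      _ = ((((T s).erase (Agent.p r s)).filter (fun b => b ∈ X)).card : ℤ) := by
          rw [Finset.sum_boole]
      _ = (X.card : ℤ) := by
          rw [Finset.filter_mem_eq_inter, Finset.inter_eq_right.mpr hXsub]
      _ = ((D.filter (fun s' => c s' = c s)).card : ℤ) := by
          rw [hXdef, Finset.card_image_of_injective _ hpinj]
      _ = _ := by
          rw [Finset.card_filter, hDdef, Finset.sum_insert hD1, Finset.sum_insert hD2,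
            Finset.sum_singleton]
  -- class size bound
  have hsize : ∀ s : Fin 5,
      (if c 0 = c s then 1 else 0) + (if c 1 = c s then 1 else 0) + (if c 2 = c s then 1 else 0)
      + (if c 3 = c s then 1 else 0) + (if c 4 = c s then 1 else 0) ≤ 3 := by
    intro s
    have himg : (Finset.univ.filter (fun s' => c s' = c s)).image (Agent.p r) ⊆ T s := by
      intro b hb
      obtain ⟨s', hs', rfl⟩ := Finset.mem_image.mp hb
      exact (hmem s s').mpr (Finset.mem_filter.mp hs').2
    have h3 : (Finset.univ.filter (fun s' => c s' = c s)).card ≤ 3 := by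
      have hle := Finset.card_le_card himg
      rwa [Finset.card_image_of_injective _ hpinj, (hMt (T s) (hTM s)).1] at hle
    rwa [Finset.card_filter, Fin.sum_univ_five] at h3
  -- valuation values inside the pentagadget
  have v_xy : ∀ s : Fin 5, redVal q G (Agent.p r s) (Agent.p r (s+1)) = 1 := by
    intro s
    show (if r = r ∧ (s + 1 - s = 1 ∨ s + 1 - s = 2 ∨ s + 1 - s = 4) then (1:ℤ) else 0) = 1
    rw [if_pos ⟨rfl, Or.inl (F1 s).1⟩]
  have v_xz : ∀ s : Fin 5, redVal q G (Agent.p r s) (Agent.p r (s+2)) = 1 := by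
    intro s
    show (if r = r ∧ (s + 2 - s = 1 ∨ s + 2 - s = 2 ∨ s + 2 - s = 4) then (1:ℤ) else 0) = 1
    rw [if_pos ⟨rfl, Or.inr (Or.inl (F1 s).2.1)⟩]
  have v_yx : ∀ s : Fin 5, redVal q G (Agent.p r (s+1)) (Agent.p r s) = 1 := by
    intro s
    show (if r = r ∧ (s - (s+1) = 1 ∨ s - (s+1) = 2 ∨ s - (s+1) = 4) then (1:ℤ) else 0) = 1
    rw [if_pos ⟨rfl, Or.inr (Or.inr (F1 s).2.2.1)⟩]
  have v_yz : ∀ s : Fin 5, redVal q G (Agent.p r (s+1)) (Agent.p r (s+2)) = 1 := by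
    intro s
    show (if r = r ∧ (s + 2 - (s+1) = 1 ∨ s + 2 - (s+1) = 2 ∨ s + 2 - (s+1) = 4)
      then (1:ℤ) else 0) = 1
    rw [if_pos ⟨rfl, Or.inl (F1 s).2.2.2.1⟩]
  have v_zx : ∀ s : Fin 5, redVal q G (Agent.p r (s+2)) (Agent.p r s) = 0 := by
    intro s
    show (if r = r ∧ (s - (s+2) = 1 ∨ s - (s+2) = 2 ∨ s - (s+2) = 4) then (1:ℤ) else 0) = 0
    refine if_neg (fun h => ?_)
    have h' := h.2
    rw [(F1 s).2.2.2.2.1] at h'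
    exact absurd h' (by decide)
  have v_zy : ∀ s : Fin 5, redVal q G (Agent.p r (s+2)) (Agent.p r (s+1)) = 1 := by
    intro s
    show (if r = r ∧ (s + 1 - (s+2) = 1 ∨ s + 1 - (s+2) = 2 ∨ s + 1 - (s+2) = 4)
      then (1:ℤ) else 0) = 1
    rw [if_pos ⟨rfl, Or.inr (Or.inr (F1 s).2.2.2.2.2)⟩]
  -- stability in counting form
  have hstabN : ∀ s : Fin 5,
      ¬ (((if c (s+1) = c s then 1 else 0) + ((if c (s+2) = c s then 1 else 0) +
          (if c (s+4) = c s then 1 else 0))) < 2 ∧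
         ((if c (s+1+1) = c (s+1) then 1 else 0) + ((if c (s+1+2) = c (s+1) then 1 else 0) +
          (if c (s+1+4) = c (s+1) then 1 else 0))) < 2 ∧
         ((if c (s+2+1) = c (s+2) then 1 else 0) + ((if c (s+2+2) = c (s+2) then 1 else 0) +
          (if c (s+2+4) = c (s+2) then 1 else 0))) < 1) := by
    intro s h
    obtain ⟨h1, h2, h3⟩ := h
    refine hstable (Agent.p r s) (Agent.p r (s+1)) (Agent.p r (s+2))
      ⟨Finset.mem_univ _, Finset.mem_univ _, Finset.mem_univ _,
       hpinj.ne (F4 s).1, hpinj.ne (F4 s).2.1, hpinj.ne (F4 s).2.2, ?_, ?_, ?_⟩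
    · rw [v_xy s, v_xz s, hutilN s]
      exact_mod_cast h1
    · rw [v_yx s, v_yz s, hutilN (s+1)]
      exact_mod_cast h2
    · rw [v_zx s, v_zy s, hutilN (s+2)]
      have : (0:ℤ) + 1 = 1 := by norm_num
      rw [this]
      exact_mod_cast h3
  -- instantiate and normalize indices
  have t0 := hstabN 0
  have t1 := hstabN 1
  have t2 := hstabN 2
  have t3 := hstabN 3
  have t4 := hstabN 4
  simp only [show (0:Fin 5)+1 = 1 from by decide, show (0:Fin 5)+2 = 2 from by decide,
    show (0:Fin 5)+4 = 4 from by decide, show (1:Fin 5)+1 = 2 from by decide,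
    show (1:Fin 5)+2 = 3 from by decide, show (1:Fin 5)+4 = 0 from by decide,
    show (2:Fin 5)+1 = 3 from by decide, show (2:Fin 5)+2 = 4 from by decide,
    show (2:Fin 5)+4 = 1 from by decide, show (3:Fin 5)+1 = 4 from by decide,
    show (3:Fin 5)+2 = 0 from by decide, show (3:Fin 5)+4 = 2 from by decide,
    show (4:Fin 5)+1 = 0 from by decide, show (4:Fin 5)+2 = 1 from by decide,
    show (4:Fin 5)+4 = 3 from by decide] at t0 t1 t2 t3 t4
  have key := pure5x (c 0) (c 1) (c 2) (c 3) (c 4)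
    (hsize 0) (hsize 1) (hsize 2) (hsize 3) (hsize 4) t0 t1 t2 t3 t4
  -- identify the filtered set with the image of T
  have hfilter : M.filter (fun t => ∃ s : Fin 5, Agent.p r s ∈ t) = Finset.univ.image T := by
    ext t
    simp only [Finset.mem_filter, Finset.mem_image, Finset.mem_univ, true_and]
    constructor
    · rintro ⟨ht, s, hs⟩
      exact ⟨s, huniq _ (hTM s) _ ht _ (hTmem s) hs⟩
    · rintro ⟨s, rfl⟩
      exact ⟨hTM s, s, hTmem s⟩
  have hinj : Set.InjOn (classIdx q r) (Finset.univ.image T) := by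
    intro t ht t' ht' h
    rw [Finset.coe_image, Set.mem_image] at ht ht'
    obtain ⟨s, -, rfl⟩ := ht
    obtain ⟨s', -, rfl⟩ := ht'
    exact (hTeq s' s).mp h
  have himg2 : (Finset.univ.image T).image (classIdx q r) = Finset.univ.image c := by
    rw [Finset.image_image]
    rfl
  have huniv5 : (Finset.univ : Finset (Fin 5)) = {0, 1, 2, 3, 4} := by decide
  calc (M.filter (fun t => ∃ s : Fin 5, Agent.p r s ∈ t)).card
      = (Finset.univ.image T).card := by rw [hfilter]
    _ = ((Finset.univ.image T).image (classIdx q r)).card :=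
        (Finset.card_image_of_injOn hinj).symm
    _ = (Finset.univ.image c).card := by rw [himg2]
    _ = ({c 0, c 1, c 2, c 3, c 4} : Finset (Fin 5)).card := by
        rw [huniv5]
        simp [Finset.image_insert]
    _ = 2 := key
end

section
/- Let G=(W,E) be a simple undirected graph with W={w_1,…,w_{3q}}, let (N,V) be the instance of 3D-SR-AS-BIN constructed from G by the reduction, and let M be a stable matching in (N,V) with |M| = |N|/3. Then u_{a_i^s}(M) = 0 for every 1 ≤ i ≤ 3q and every s ∈ {1,2}. -/
open Finset

variable {A : Type*}

open Finset

/-! ### Pentagon core, over ℕ -/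

def nth5 (FA FB FC FD FE : ℕ) : ℕ → ℕ
  | 0 => FA | 1 => FB | 2 => FC | 3 => FD | _ => FE

def wZ (x y : ℕ) : ℕ :=
  if (5 + y - x) % 5 = 1 ∨ (5 + y - x) % 5 = 2 ∨ (5 + y - x) % 5 = 4 then 1 else 0

def uZ (FA FB FC FD FE t : ℕ) : ℕ :=
  (if (0 ≠ t ∧ nth5 FA FB FC FD FE 0 = nth5 FA FB FC FD FE t) then wZ t 0 else 0) +
  (if (1 ≠ t ∧ nth5 FA FB FC FD FE 1 = nth5 FA FB FC FD FE t) then wZ t 1 else 0) +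
  (if (2 ≠ t ∧ nth5 FA FB FC FD FE 2 = nth5 FA FB FC FD FE t) then wZ t 2 else 0) +
  (if (3 ≠ t ∧ nth5 FA FB FC FD FE 3 = nth5 FA FB FC FD FE t) then wZ t 3 else 0) +
  (if (4 ≠ t ∧ nth5 FA FB FC FD FE 4 = nth5 FA FB FC FD FE t) then wZ t 4 else 0)

def premZ (FA FB FC FD FE : ℕ) : Prop :=
  ∀ c < 5, (if FA = c then 1 else 0) + (if FB = c then 1 else 0) + (if FC = c then 1 else 0) +
    (if FD = c then 1 else 0) + (if FE = c then 1 else 0) ≤ 3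

def conclZ (FA FB FC FD FE : ℕ) : Prop :=
  (∃ t < 5, uZ FA FB FC FD FE t < 2 ∧ uZ FA FB FC FD FE ((t+1) % 5) < 2 ∧
    uZ FA FB FC FD FE ((t+2) % 5) < 1) ∨
  (∃ t < 5, nth5 FA FB FC FD FE ((t+1) % 5) = nth5 FA FB FC FD FE t ∧
    nth5 FA FB FC FD FE ((t+2) % 5) = nth5 FA FB FC FD FE t ∧
    nth5 FA FB FC FD FE ((t+4) % 5) = nth5 FA FB FC FD FE ((t+3) % 5) ∧
    nth5 FA FB FC FD FE t ≠ nth5 FA FB FC FD FE ((t+3) % 5))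

instance (FA FB FC FD FE : ℕ) : Decidable (premZ FA FB FC FD FE) := by
  unfold premZ; infer_instance
instance (FA FB FC FD FE : ℕ) : Decidable (conclZ FA FB FC FD FE) := by
  unfold conclZ; infer_instance

set_option maxRecDepth 1000000 in
set_option maxHeartbeats 8000000 in
theorem keyZ : ∀ FA FB FC FD FE : Fin 5,
    premZ FA.val FB.val FC.val FD.val FE.val →
    conclZ FA.val FB.val FC.val FD.val FE.val := by
  decide

/-! ### Bridge: Fin 5 level -/

def wN (x y : Fin 5) : ℕ := if y - x = 1 ∨ y - x = 2 ∨ y - x = 4 then 1 else 0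

def uF (f : Fin 5 → Fin 5) (t : Fin 5) : ℕ :=
  ∑ s ∈ univ.filter (fun s => s ≠ t ∧ f s = f t), wN t s

lemma nth5_val (f : Fin 5 → Fin 5) (t : Fin 5) :
    nth5 (f 0).val (f 1).val (f 2).val (f 3).val (f 4).val t.val = (f t).val := by
  fin_cases t <;> rfl

lemma wZ_eq_wN (t s : Fin 5) : wZ t.val s.val = wN t s := by
  revert t s; decide

lemma val_add_one (t : Fin 5) : (t + 1).val = (t.val + 1) % 5 := by
  revert t; decide
lemma val_add_two (t : Fin 5) : (t + 2).val = (t.val + 2) % 5 := by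
  revert t; decide
lemma val_add_three (t : Fin 5) : (t + 3).val = (t.val + 3) % 5 := by
  revert t; decide
lemma val_add_four (t : Fin 5) : (t + 4).val = (t.val + 4) % 5 := by
  revert t; decide

lemma nth5_0 (FA FB FC FD FE : ℕ) : nth5 FA FB FC FD FE 0 = FA := rfl
lemma nth5_1 (FA FB FC FD FE : ℕ) : nth5 FA FB FC FD FE 1 = FB := rfl
lemma nth5_2 (FA FB FC FD FE : ℕ) : nth5 FA FB FC FD FE 2 = FC := rfl
lemma nth5_3 (FA FB FC FD FE : ℕ) : nth5 FA FB FC FD FE 3 = FD := rfl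
lemma nth5_4 (FA FB FC FD FE : ℕ) : nth5 FA FB FC FD FE 4 = FE := rfl

lemma uF_eq_uZ (f : Fin 5 → Fin 5) (t : Fin 5) :
    uF f t = uZ (f 0).val (f 1).val (f 2).val (f 3).val (f 4).val t.val := by
  rw [uF, sum_filter, Fin.sum_univ_five]
  fin_cases t <;>
    simp (config := { decide := true }) [uZ, nth5_0, nth5_1, nth5_2, nth5_3, nth5_4,
      Fin.val_inj, wZ, wN]

/-- Fin-5-level pentagon lemma. -/
theorem pentagonKey (f : Fin 5 → Fin 5)
    (h : ∀ c : Fin 5, (univ.filter (fun s => f s = c)).card ≤ 3) :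
    (∃ t : Fin 5, uF f t < 2 ∧ uF f (t + 1) < 2 ∧ uF f (t + 2) < 1) ∨
    (∃ t : Fin 5, f (t + 1) = f t ∧ f (t + 2) = f t ∧ f (t + 4) = f (t + 3) ∧
      f t ≠ f (t + 3)) := by
  have hprem : premZ (f 0).val (f 1).val (f 2).val (f 3).val (f 4).val := by
    intro c hc
    have hcard := h ⟨c, hc⟩
    rw [Finset.card_filter, Fin.sum_univ_five] at hcard
    have hiff : ∀ x : Fin 5, (f x = ⟨c, hc⟩) ↔ ((f x).val = c) := by
      intro x; rw [Fin.ext_iff]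
    simpa [hiff] using hcard
  rcases keyZ (f 0) (f 1) (f 2) (f 3) (f 4) hprem with
    ⟨t, ht5, h1, h2, h3⟩ | ⟨t, ht5, h1, h2, h3, h4⟩
  · left
    refine ⟨⟨t, ht5⟩, ?_, ?_, ?_⟩
    · rw [uF_eq_uZ]; exact h1
    · rw [uF_eq_uZ, val_add_one]; exact h2
    · rw [uF_eq_uZ, val_add_two]; exact h3
  · right
    have e : ∀ x : Fin 5, (f x).val =
        nth5 (f 0).val (f 1).val (f 2).val (f 3).val (f 4).val x.val :=
      fun x => (nth5_val f x).symm
    refine ⟨⟨t, ht5⟩, ?_, ?_, ?_, ?_⟩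
    · apply Fin.val_inj.mp
      rw [e (⟨t, ht5⟩ + 1), e ⟨t, ht5⟩, val_add_one]; exact h1
    · apply Fin.val_inj.mp
      rw [e (⟨t, ht5⟩ + 2), e ⟨t, ht5⟩, val_add_two]; exact h2
    · apply Fin.val_inj.mp
      rw [e (⟨t, ht5⟩ + 4), e (⟨t, ht5⟩ + 3), val_add_four, val_add_three]; exact h3
    · intro hc
      apply h4
      have hcv := congrArg Fin.val hc
      rw [e ⟨t, ht5⟩, e (⟨t, ht5⟩ + 3), val_add_three] at hcv
      exact hcv

/-! ### Generic matching lemmas -/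

section Generic
variable [DecidableEq A] {N : Finset A} {M : Finset (Finset A)}

lemma triple_unique (hM : IsMatching N M) {T T' : Finset A} {x : A}
    (hT : T ∈ M) (hT' : T' ∈ M) (hx : x ∈ T) (hx' : x ∈ T') : T = T' := by
  by_contra hne
  exact (Finset.disjoint_left.mp (hM.2 T hT T' hT' hne)) hx hx'

lemma utility_eq_of_mem (hM : IsMatching N M) {T : Finset A} {x : A}
    (hT : T ∈ M) (hx : x ∈ T) (val : A → A → ℤ) :
    utility val M x = ∑ b ∈ T.erase x, val x b := by
  have : M.filter (fun t => x ∈ t) = {T} := by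
    ext u
    simp only [mem_filter, mem_singleton]
    constructor
    · rintro ⟨hu, hxu⟩; exact (triple_unique hM hu hT hxu hx)
    · rintro rfl; exact ⟨hT, hx⟩
  rw [utility, this, sum_singleton]

lemma utility_eq_zero_of_unmatched [DecidableEq A] {M : Finset (Finset A)} {x : A}
    (h : ¬ ∃ T ∈ M, x ∈ T) (val : A → A → ℤ) : utility val M x = 0 := by
  have : M.filter (fun t => x ∈ t) = ∅ := by
    ext u; simp only [mem_filter, notMem_empty, iff_false]
    rintro ⟨hu, hxu⟩; exact h ⟨u, hu, hxu⟩
  rw [utility, this, sum_empty]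

end Generic

/-! ### Instance-specific lemmas -/

section Inst
variable {q : ℕ} {G : SimpleGraph (Fin (3*q))} [DecidableRel G.Adj]

lemma redVal_nonneg (x y : Agent q) : 0 ≤ redVal q G x y := by
  cases x <;> cases y <;> simp only [redVal] <;> (try split) <;> norm_num

lemma redVal_pp (r r' : Fin (6*q)) (t t' : Fin 5) :
    redVal q G (.p r t) (.p r' t') =
      if r = r' ∧ (t' - t = 1 ∨ t' - t = 2 ∨ t' - t = 4) then 1 else 0 := rfl

lemma redVal_pa (r : Fin (6*q)) (t : Fin 5) (j : Fin (3*q)) (σ : Fin 2) :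
    redVal q G (.p r t) (.a j σ) = 0 := rfl

lemma redVal_pb (r : Fin (6*q)) (t : Fin 5) (j : Fin (3*q)) :
    redVal q G (.p r t) (.b j) = 0 := rfl

lemma redVal_bp (r : Fin (6*q)) (t : Fin 5) (j : Fin (3*q)) :
    redVal q G (.b j) (.p r t) = 0 := rfl

lemma redVal_ap (r : Fin (6*q)) (t : Fin 5) (j : Fin (3*q)) (σ : Fin 2) :
    redVal q G (.a j σ) (.p r t) = 0 := rfl

variable {M : Finset (Finset (Agent q))}

lemma utility_nonneg (x : Agent q) : 0 ≤ utility (redVal q G) M x := by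
  apply Finset.sum_nonneg
  intro t _
  exact Finset.sum_nonneg fun b _ => redVal_nonneg x b

lemma redVal_wN (r : Fin (6*q)) (t s : Fin 5) :
    redVal q G (.p r t) (.p r s) = (wN t s : ℤ) := by
  rw [redVal_pp, wN]
  split <;> simp_all

/-! ### Triple and gadget structure functions -/

open Classical in
noncomputable def tri (M : Finset (Finset (Agent q))) (x : Agent q) : Finset (Agent q) :=
  if h : ∃ T ∈ M, x ∈ T then h.choose else ∅

variable {M : Finset (Finset (Agent q))}

lemma tri_mem {x : Agent q} (h : ∃ T ∈ M, x ∈ T) : tri M x ∈ M ∧ x ∈ tri M x := by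
  rw [tri, dif_pos h]
  exact ⟨h.choose_spec.1, h.choose_spec.2⟩

lemma tri_eq (hM : IsMatching univ M) {T : Finset (Agent q)} {x : Agent q}
    (hT : T ∈ M) (hx : x ∈ T) : tri M x = T :=
  triple_unique hM (tri_mem ⟨T, hT, hx⟩).1 hT (tri_mem ⟨T, hT, hx⟩).2 hx

lemma tri_empty {x : Agent q} (h : ¬ ∃ T ∈ M, x ∈ T) : tri M x = ∅ := by
  rw [tri, dif_neg h]

noncomputable def pgroup (M : Finset (Finset (Agent q))) (r : Fin (6*q)) (t : Fin 5) : Finset (Fin 5) :=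
  univ.filter (fun s => Agent.p r s ∈ tri M (Agent.p r t))

noncomputable def gf (M : Finset (Finset (Agent q))) (r : Fin (6*q)) : Fin 5 → Fin 5 :=
  fun t => if h : (pgroup M r t).Nonempty then (pgroup M r t).min' h else t

lemma gf_unmatched {r : Fin (6*q)} {t : Fin 5} (h : ¬ ∃ T ∈ M, Agent.p r t ∈ T) :
    gf M r t = t := by
  have : pgroup M r t = ∅ := by
    rw [pgroup, tri_empty h]
    simp
  rw [gf, dif_neg]
  rw [this]
  simp

lemma gf_mem {r : Fin (6*q)} {t : Fin 5} (h : ∃ T ∈ M, Agent.p r t ∈ T) :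
    Agent.p r (gf M r t) ∈ tri M (Agent.p r t) := by
  have ht : t ∈ pgroup M r t := mem_filter.mpr ⟨mem_univ _, (tri_mem h).2⟩
  have hne : (pgroup M r t).Nonempty := ⟨t, ht⟩
  rw [gf, dif_pos hne]
  exact (mem_filter.mp ((pgroup M r t).min'_mem hne)).2

lemma gf_eq_of_mem (hM : IsMatching univ M) {r : Fin (6*q)} {T : Finset (Agent q)}
    (hT : T ∈ M) {s t : Fin 5} (hs : Agent.p r s ∈ T) (ht : Agent.p r t ∈ T) :
    gf M r s = gf M r t := by
  have hps : pgroup M r s = pgroup M r t := by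
    rw [pgroup, pgroup, tri_eq hM hT hs, tri_eq hM hT ht]
  have hsn : (pgroup M r s).Nonempty :=
    ⟨s, mem_filter.mpr ⟨mem_univ _, (tri_mem ⟨T, hT, hs⟩).2⟩⟩
  have htn : (pgroup M r t).Nonempty :=
    ⟨t, mem_filter.mpr ⟨mem_univ _, (tri_mem ⟨T, hT, ht⟩).2⟩⟩
  simp only [gf]
  rw [dif_pos hsn, dif_pos htn]
  have h1 : (pgroup M r t).min' htn ∈ pgroup M r s := by
    rw [hps]; exact min'_mem _ htn
  have h2 : (pgroup M r s).min' hsn ∈ pgroup M r t := by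
    rw [← hps]; exact min'_mem _ hsn
  exact le_antisymm (min'_le _ _ h1) (min'_le _ _ h2)

lemma gf_eq_iff (hM : IsMatching univ M) {r : Fin (6*q)} {s t : Fin 5} (hst : s ≠ t) :
    gf M r s = gf M r t ↔ ∃ T ∈ M, Agent.p r s ∈ T ∧ Agent.p r t ∈ T := by
  constructor
  · intro hf
    by_cases hs : ∃ T ∈ M, Agent.p r s ∈ T
    · by_cases ht : ∃ T ∈ M, Agent.p r t ∈ T
      · have h1 := gf_mem (M := M) hs
        have h2 := gf_mem (M := M) ht
        rw [hf] at h1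
        have heq : tri M (Agent.p r s) = tri M (Agent.p r t) :=
          triple_unique hM (tri_mem hs).1 (tri_mem ht).1 h1 h2
        exact ⟨tri M (Agent.p r t), (tri_mem ht).1, heq ▸ (tri_mem hs).2, (tri_mem ht).2⟩
      · exfalso
        have h1 := gf_mem (M := M) hs
        rw [hf, gf_unmatched ht] at h1
        exact ht ⟨tri M (Agent.p r s), (tri_mem hs).1, h1⟩
    · by_cases ht : ∃ T ∈ M, Agent.p r t ∈ T
      · exfalso
        have h2 := gf_mem (M := M) ht
        rw [← hf, gf_unmatched hs] at h2
        exact hs ⟨tri M (Agent.p r t), (tri_mem ht).1, h2⟩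
      · exfalso
        rw [gf_unmatched hs, gf_unmatched ht] at hf
        exact hst hf
  · rintro ⟨T, hT, hs, ht⟩
    exact gf_eq_of_mem hM hT hs ht

lemma gf_fiber_card (hM : IsMatching univ M) (r : Fin (6*q)) (c : Fin 5) :
    (univ.filter (fun s => gf M r s = c)).card ≤ 3 := by
  set F := univ.filter (fun s => gf M r s = c) with hF
  by_cases hex : ∃ s₀ ∈ F, ∃ T ∈ M, Agent.p r s₀ ∈ T
  · obtain ⟨s₀, hs₀F, hs₀m⟩ := hex
    have hT₀ : tri M (Agent.p r s₀) ∈ M := (tri_mem hs₀m).1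
    have hsub : ∀ s ∈ F, Agent.p r s ∈ tri M (Agent.p r s₀) := by
      intro s hsF
      by_cases h : s = s₀
      · subst h; exact (tri_mem hs₀m).2
      · have hgf : gf M r s = gf M r s₀ := by
          rw [hF, mem_filter] at hsF hs₀F
          rw [hsF.2, hs₀F.2]
        obtain ⟨T, hT, hsT, hs₀T⟩ := (gf_eq_iff hM h).mp hgf
        rwa [tri_eq hM hT hs₀T]
    have hinj : Set.InjOn (fun s => Agent.p r s) F := by
      intro a _ b _ hab
      simpa using hab
    have := Finset.card_le_card_of_injOn (fun s => Agent.p r s) hsub hinj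
    rw [(hM.1 _ hT₀).1] at this
    exact this
  · push_neg at hex
    have : F ⊆ {c} := by
      intro s hsF
      have h1 : gf M r s = c := (mem_filter.mp hsF).2
      have hnm : ¬ ∃ T ∈ M, Agent.p r s ∈ T := by push_neg; exact hex s hsF
      rw [gf_unmatched hnm] at h1
      simp [h1]
    calc F.card ≤ ({c} : Finset (Fin 5)).card := card_le_card this
    _ ≤ 3 := by simp

lemma utility_p (hM : IsMatching univ M) (r : Fin (6*q)) (t : Fin 5) :
    utility (redVal q G) M (Agent.p r t) = ((uF (gf M r) t : ℕ) : ℤ) := by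
  by_cases h : ∃ T ∈ M, Agent.p r t ∈ T
  · obtain ⟨T, hT, htT⟩ := h
    rw [utility_eq_of_mem hM hT htT]
    have hset : univ.filter (fun s => s ≠ t ∧ gf M r s = gf M r t)
        = univ.filter (fun s => s ≠ t ∧ Agent.p r s ∈ T) := by
      ext u
      simp only [mem_filter, mem_univ, true_and]
      constructor
      · rintro ⟨hne, hf⟩
        obtain ⟨T', hT', hsT', htT'⟩ := (gf_eq_iff hM hne).mp hf
        exact ⟨hne, triple_unique hM hT' hT htT' htT ▸ hsT'⟩
      · rintro ⟨hne, hsT⟩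
        exact ⟨hne, (gf_eq_iff hM hne).mpr ⟨T, hT, hsT, htT⟩⟩
    rw [uF, hset]
    set S := univ.filter (fun s => s ≠ t ∧ Agent.p r s ∈ T) with hS
    have hinj : ∀ a ∈ S, ∀ b ∈ S, Agent.p r a = Agent.p r b → a = b := by
      intro a _ b _ hab; simpa using hab
    symm
    calc ((∑ s ∈ S, wN t s : ℕ) : ℤ) = ∑ s ∈ S, ((wN t s : ℕ) : ℤ) := by push_cast; ring
    _ = ∑ s ∈ S, redVal q G (Agent.p r t) (Agent.p r s) := by
        exact sum_congr rfl fun s _ => (redVal_wN r t s).symm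
    _ = ∑ x ∈ S.image (fun s => Agent.p r s), redVal q G (Agent.p r t) x :=
        (sum_image hinj).symm
    _ = ∑ b ∈ T.erase (Agent.p r t), redVal q G (Agent.p r t) b := by
        apply sum_subset
        · intro x hx
          obtain ⟨u, hu, rfl⟩ := mem_image.mp hx
          rw [hS, mem_filter] at hu
          exact mem_erase.mpr ⟨by simpa using hu.2.1, hu.2.2⟩
        · intro x hxT hxim
          match x with
          | Agent.a j σ => exact redVal_pa r t j σ
          | Agent.b j => exact redVal_pb r t j
          | Agent.p r'' t'' =>
            by_cases hr : r = r''
            · subst hr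
              exfalso
              apply hxim
              apply mem_image.mpr
              refine ⟨t'', ?_, rfl⟩
              rw [hS, mem_filter]
              have := mem_erase.mp hxT
              exact ⟨mem_univ _, by simpa using this.1, this.2⟩
            · rw [redVal_pp]
              simp [hr]
  · rw [utility_eq_zero_of_unmatched h]
    have : uF (gf M r) t = 0 := by
      rw [uF]
      have : univ.filter (fun s => s ≠ t ∧ gf M r s = gf M r t) = ∅ := by
        ext u
        simp only [mem_filter, mem_univ, true_and, notMem_empty, iff_false, not_and]
        intro hne hf
        obtain ⟨T, hT, _, htT⟩ := (gf_eq_iff hM hne).mp hf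
        exact h ⟨T, hT, htT⟩
      rw [this, sum_empty]
    rw [this]
    norm_num

/-! ### Small decidable facts -/

lemma f5_1 : ∀ t : Fin 5, t + 1 ≠ t := by decide
lemma f5_2 : ∀ t : Fin 5, t + 2 ≠ t := by decide
lemma f5_21 : ∀ t : Fin 5, t + 2 ≠ t + 1 := by decide
lemma f5_43 : ∀ t : Fin 5, t + 4 ≠ t + 3 := by decide
lemma f5_3t : ∀ t : Fin 5, t + 3 ≠ t := by decide
lemma f5_31 : ∀ t : Fin 5, t + 3 ≠ t + 1 := by decide
lemma f5_32 : ∀ t : Fin 5, t + 3 ≠ t + 2 := by decide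
lemma f5_34 : ∀ t : Fin 5, t + 3 ≠ t + 4 := by decide
lemma fin5_cover : ∀ s t : Fin 5, s = t ∨ s = t+1 ∨ s = t+2 ∨ s = t+3 ∨ s = t+4 := by decide
lemma fin5_subs : ∀ t : Fin 5, (t+1) - t = 1 ∧ (t+2) - t = 2 ∧ t - (t+1) = 4 ∧
    (t+2) - (t+1) = 1 ∧ t - (t+2) = 3 ∧ (t+1) - (t+2) = 4 := by decide
lemma fin2_other : ∀ σ σ' : Fin 2, σ' ≠ σ → σ' = 1 - σ := by decide

lemma p_ne {r r' : Fin (6*q)} {t t' : Fin 5} (h : t ≠ t') :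
    Agent.p r t ≠ Agent.p r' t' := by
  intro hc
  rw [Agent.p.injEq] at hc
  exact h hc.2

lemma card_triple {x y z : Agent q} (hxy : x ≠ y) (hxz : x ≠ z) (hyz : y ≠ z) :
    ({x, y, z} : Finset (Agent q)).card = 3 := by
  rw [card_insert_of_notMem (by simp [hxy, hxz]),
    card_insert_of_notMem (by simp [hyz]), card_singleton]

/-! ### Gadget structure -/

lemma gadget_exc (hM : IsMatching univ M) (hst : IsStable univ (redVal q G) M)
    (r : Fin (6*q)) :
    ∃ t : Fin 5,
      (∃ TP ∈ M, TP = ({Agent.p r t, Agent.p r (t+1), Agent.p r (t+2)} : Finset (Agent q))) ∧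
      ∃ T' ∈ M, Agent.p r (t+3) ∈ T' ∧ Agent.p r (t+4) ∈ T' ∧
        ∀ s : Fin 5, Agent.p r s ∈ T' → s = t+3 ∨ s = t+4 := by
  rcases pentagonKey (gf M r) (gf_fiber_card hM r) with ⟨t, h1, h2, h3⟩ | ⟨t, h1, h2, h3, _h4⟩
  · exfalso
    have e1 : redVal q G (.p r t) (.p r (t+1)) = 1 := by
      rw [redVal_pp]; simp [(fin5_subs t).1]
    have e2 : redVal q G (.p r t) (.p r (t+2)) = 1 := by
      rw [redVal_pp]; simp [(fin5_subs t).2.1]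
    have e3 : redVal q G (.p r (t+1)) (.p r t) = 1 := by
      rw [redVal_pp]; simp [(fin5_subs t).2.2.1]
    have e4 : redVal q G (.p r (t+1)) (.p r (t+2)) = 1 := by
      rw [redVal_pp]; simp [(fin5_subs t).2.2.2.1]
    have e5 : redVal q G (.p r (t+2)) (.p r t) = 0 := by
      rw [redVal_pp]
      simp (config := { decide := true }) [(fin5_subs t).2.2.2.2.1]
    have e6 : redVal q G (.p r (t+2)) (.p r (t+1)) = 1 := by
      rw [redVal_pp]
      simp (config := { decide := true }) [(fin5_subs t).2.2.2.2.2]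
    apply hst (Agent.p r t) (Agent.p r (t+1)) (Agent.p r (t+2))
    refine ⟨mem_univ _, mem_univ _, mem_univ _,
      p_ne (f5_1 t).symm, p_ne (f5_2 t).symm, p_ne (f5_21 t).symm, ?_, ?_, ?_⟩
    · rw [utility_p hM, e1, e2]
      have : ((uF (gf M r) t : ℕ) : ℤ) < 2 := by exact_mod_cast h1
      linarith
    · rw [utility_p hM, e3, e4]
      have : ((uF (gf M r) (t+1) : ℕ) : ℤ) < 2 := by exact_mod_cast h2
      linarith
    · rw [utility_p hM, e5, e6]
      have : ((uF (gf M r) (t+2) : ℕ) : ℤ) < 1 := by exact_mod_cast h3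
      linarith
  · obtain ⟨T, hT, h1T, htT⟩ := (gf_eq_iff hM (f5_1 t)).mp h1
    obtain ⟨T₂, hT₂, h2T₂, htT₂⟩ := (gf_eq_iff hM (f5_2 t)).mp h2
    have hTT₂ : T₂ = T := triple_unique hM hT₂ hT htT₂ htT
    rw [hTT₂] at h2T₂
    have hsub : ({Agent.p r t, Agent.p r (t+1), Agent.p r (t+2)} : Finset (Agent q)) ⊆ T := by
      intro x hx
      simp only [mem_insert, mem_singleton] at hx
      rcases hx with rfl | rfl | rfl
      · exact htT
      · exact h1T
      · exact h2T₂
    have hTeq : T = ({Agent.p r t, Agent.p r (t+1), Agent.p r (t+2)} : Finset (Agent q)) := by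
      refine (eq_of_subset_of_card_le hsub ?_).symm
      rw [(hM.1 T hT).1,
        card_triple (p_ne (f5_1 t).symm) (p_ne (f5_2 t).symm) (p_ne (f5_21 t).symm)]
    obtain ⟨T', hT', h4T', h3T'⟩ := (gf_eq_iff hM (f5_43 t)).mp h3
    refine ⟨t, ⟨T, hT, hTeq⟩, T', hT', h3T', h4T', ?_⟩
    intro u huT'
    by_contra hcon
    push_neg at hcon
    have huT : Agent.p r u ∈ T := by
      rcases fin5_cover u t with rfl | rfl | rfl | h | h
      · rw [hTeq]; simp
      · rw [hTeq]; simp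
      · rw [hTeq]; simp
      · exact absurd h hcon.1
      · exact absurd h hcon.2
    have hTT' : T = T' := triple_unique hM hT hT' huT huT'
    have h3mem := h3T'
    rw [← hTT', hTeq] at h3mem
    simp only [mem_insert, mem_singleton, Agent.p.injEq, true_and] at h3mem
    rcases h3mem with h | h | h
    · exact f5_3t t h
    · exact f5_31 t h
    · exact f5_32 t h

lemma utility_a_le_one (hM : IsMatching univ M) {j : Fin (3*q)} (σ : Fin 2)
    (hb : ∀ T ∈ M, Agent.a j σ ∈ T → Agent.b j ∉ T) :
    utility (redVal q G) M (Agent.a j σ) ≤ 1 := by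
  by_cases h : ∃ T ∈ M, Agent.a j σ ∈ T
  · obtain ⟨T, hT, haT⟩ := h
    rw [utility_eq_of_mem hM hT haT]
    have hpoint : ∀ x ∈ T.erase (Agent.a j σ),
        redVal q G (Agent.a j σ) x ≤ if x = Agent.a j (1 - σ) then 1 else 0 := by
      intro x hx
      match x with
      | Agent.a j' σ' =>
        show (if j = j' ∧ σ ≠ σ' then (1:ℤ) else 0) ≤ _
        by_cases hc : j = j' ∧ σ ≠ σ'
        · rw [if_pos hc, if_pos]
          rw [Agent.a.injEq]
          exact ⟨hc.1.symm, fin2_other σ σ' (Ne.symm hc.2)⟩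
        · rw [if_neg hc]
          split <;> norm_num
      | Agent.b j' =>
        show (if j = j' then (1:ℤ) else 0) ≤ _
        by_cases hjj : j = j'
        · exfalso
          subst hjj
          exact hb T hT haT (mem_of_mem_erase hx)
        · rw [if_neg hjj]
          split <;> norm_num
      | Agent.p r'' t'' =>
        rw [redVal_ap]
        split <;> norm_num
    calc ∑ x ∈ T.erase (Agent.a j σ), redVal q G (Agent.a j σ) x
        ≤ ∑ x ∈ T.erase (Agent.a j σ), (if x = Agent.a j (1 - σ) then (1:ℤ) else 0) :=
          sum_le_sum hpoint
    _ ≤ 1 := by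
        rw [Finset.sum_ite_eq' (T.erase (Agent.a j σ)) (Agent.a j (1 - σ)) (fun _ => (1:ℤ))]
        split <;> norm_num
  · rw [utility_eq_zero_of_unmatched h]
    norm_num

lemma gadget_pair (hM : IsMatching univ M) (hst : IsStable univ (redVal q G) M)
    (r : Fin (6*q)) :
    ∃ (t : Fin 5) (j : Fin (3*q)) (σ : Fin 2),
      ({Agent.p r (t+3), Agent.p r (t+4), Agent.a j σ} : Finset (Agent q)) ∈ M := by
  obtain ⟨t, ⟨TP, hTP, hTPeq⟩, T', hT', h3T, h4T, hfull⟩ := gadget_exc hM hst r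
  have hne34 : Agent.p r (t+3) ≠ Agent.p r (t+4) := p_ne (f5_34 t)
  have hpsub : ({Agent.p r (t+3), Agent.p r (t+4)} : Finset (Agent q)) ⊆ T' := by
    intro x hx
    simp only [mem_insert, mem_singleton] at hx
    rcases hx with rfl | rfl
    · exact h3T
    · exact h4T
  have hpcard : ({Agent.p r (t+3), Agent.p r (t+4)} : Finset (Agent q)).card = 2 := by
    rw [card_insert_of_notMem (by simp [hne34]), card_singleton]
  have hcT' : T'.card = 3 := (hM.1 T' hT').1
  have hss : ({Agent.p r (t+3), Agent.p r (t+4)} : Finset (Agent q)) ⊂ T' := by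
    refine hpsub.ssubset_of_ne ?_
    intro h
    rw [h, hcT'] at hpcard
    omega
  obtain ⟨z, hzT, hznp⟩ := Finset.exists_of_ssubset hss
  have hz3 : z ≠ Agent.p r (t+3) := by intro h; subst h; exact hznp (by simp)
  have hz4 : z ≠ Agent.p r (t+4) := by intro h; subst h; exact hznp (by simp)
  have hTeq : T' = ({Agent.p r (t+3), Agent.p r (t+4), z} : Finset (Agent q)) := by
    refine (eq_of_subset_of_card_le ?_ ?_).symm
    · intro x hx
      simp only [mem_insert, mem_singleton] at hx
      rcases hx with rfl | rfl | rfl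
      · exact h3T
      · exact h4T
      · exact hzT
    · rw [hcT', card_triple hne34 (Ne.symm hz3) (Ne.symm hz4)]
  cases z with
  | p r'' t'' =>
    exfalso
    by_cases hr : r'' = r
    · subst hr
      rcases hfull t'' hzT with h | h
      · exact hz3 (by rw [h])
      · exact hz4 (by rw [h])
    · obtain ⟨t', ⟨TP', hTP', hTP'eq⟩, T'', hT'', h3T'', h4T'', _⟩ := gadget_exc hM hst r''
      have hpure : ∀ h : t'' = t' ∨ t'' = t' + 1 ∨ t'' = t' + 2, False := by
        intro h
        have hzTP' : Agent.p r'' t'' ∈ TP' := by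
          rw [hTP'eq]
          rcases h with rfl | rfl | rfl <;> simp
        have hTT : T' = TP' := triple_unique hM hT' hTP' hzT hzTP'
        have h3m := h3T
        rw [hTT, hTP'eq] at h3m
        simp only [mem_insert, mem_singleton, Agent.p.injEq] at h3m
        rcases h3m with ⟨hrr, _⟩ | ⟨hrr, _⟩ | ⟨hrr, _⟩ <;> exact hr hrr.symm
      rcases fin5_cover t'' t' with h | h | h | h | h
      · exact hpure (Or.inl h)
      · exact hpure (Or.inr (Or.inl h))
      · exact hpure (Or.inr (Or.inr h))
      · -- t'' = t' + 3 : z is in the pair triple of gadget r''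
        have hzT'' : Agent.p r'' t'' ∈ T'' := by rw [h]; exact h3T''
        have hTT : T' = T'' := triple_unique hM hT' hT'' hzT hzT''
        have h4m := h4T''
        rw [← hTT, hTeq] at h4m
        simp only [mem_insert, mem_singleton, Agent.p.injEq] at h4m
        rcases h4m with ⟨hrr, _⟩ | ⟨hrr, _⟩ | ⟨_, h4e⟩
        · exact hr hrr
        · exact hr hrr
        · rw [h] at h4e
          exact f5_43 t' h4e
      · -- t'' = t' + 4
        have hzT'' : Agent.p r'' t'' ∈ T'' := by rw [h]; exact h4T''
        have hTT : T' = T'' := triple_unique hM hT' hT'' hzT hzT''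
        have h3m := h3T''
        rw [← hTT, hTeq] at h3m
        simp only [mem_insert, mem_singleton, Agent.p.injEq] at h3m
        rcases h3m with ⟨hrr, _⟩ | ⟨hrr, _⟩ | ⟨_, h3e⟩
        · exact hr hrr
        · exact hr hrr
        · rw [h] at h3e
          exact f5_34 t' h3e
  | b j =>
    exfalso
    have hub : utility (redVal q G) M (Agent.b j) = 0 := by
      rw [utility_eq_of_mem hM hT' hzT]
      apply Finset.sum_eq_zero
      intro x hx
      have hxT := mem_of_mem_erase hx
      have hxne := (mem_erase.mp hx).1
      rw [hTeq] at hxT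
      simp only [mem_insert, mem_singleton] at hxT
      rcases hxT with rfl | rfl | rfl
      · exact redVal_bp _ _ _
      · exact redVal_bp _ _ _
      · exact absurd rfl hxne
    have hbne : ∀ σ : Fin 2, ∀ T ∈ M, Agent.a j σ ∈ T → Agent.b j ∉ T := by
      intro σ T hT haT hbT
      have hTT : T = T' := triple_unique hM hT hT' hbT hzT
      rw [hTT, hTeq] at haT
      simp at haT
    have hv0 : redVal q G (Agent.a j 0) (Agent.a j 1) = 1 := by
      show (if j = j ∧ (0 : Fin 2) ≠ 1 then (1:ℤ) else 0) = 1
      rw [if_pos ⟨rfl, by decide⟩]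
    have hv1 : redVal q G (Agent.a j 1) (Agent.a j 0) = 1 := by
      show (if j = j ∧ (1 : Fin 2) ≠ 0 then (1:ℤ) else 0) = 1
      rw [if_pos ⟨rfl, by decide⟩]
    have hab : ∀ σ : Fin 2, redVal q G (Agent.a j σ) (Agent.b j) = 1 := by
      intro σ
      show (if j = j then (1:ℤ) else 0) = 1
      rw [if_pos rfl]
    have hba : ∀ σ : Fin 2, redVal q G (Agent.b j) (Agent.a j σ) = 1 := by
      intro σ
      show (if j = j then (1:ℤ) else 0) = 1
      rw [if_pos rfl]
    apply hst (Agent.a j 0) (Agent.a j 1) (Agent.b j)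
    refine ⟨mem_univ _, mem_univ _, mem_univ _, ?_, ?_, ?_, ?_, ?_, ?_⟩
    · intro hc
      rw [Agent.a.injEq] at hc
      exact absurd hc.2 (by decide)
    · exact fun hc => nomatch hc
    · exact fun hc => nomatch hc
    · rw [hv0, hab 0]
      linarith [utility_a_le_one (G := G) hM (j := j) 0 (hbne 0)]
    · rw [hv1, hab 1]
      linarith [utility_a_le_one (G := G) hM (j := j) 1 (hbne 1)]
    · rw [hub, hba 0, hba 1]
      norm_num
  | a j σ =>
    exact ⟨t, j, σ, hTeq ▸ hT'⟩

end Inst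

/-- In any stable matching of the reduced instance in which every agent is matched, every
agent `a_i^s` has utility `0`. -/
theorem a_agents_utility_zero
    (q : ℕ) (G : SimpleGraph (Fin (3*q))) [DecidableRel G.Adj]
    (M : Finset (Finset (Agent q)))
    (hM : IsMatching (Finset.univ : Finset (Agent q)) M)
    (hstable : IsStable Finset.univ (redVal q G) M)
    (hcard : M.card = 13 * q) (i : Fin (3*q)) (s : Fin 2) :
    utility (redVal q G) M (Agent.a i s) = 0 := by
  by_contra hne
  have hpos : 0 < utility (redVal q G) M (Agent.a i s) :=
    lt_of_le_of_ne (utility_nonneg _) (Ne.symm hne)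
  have hm : ∃ T ∈ M, Agent.a i s ∈ T := by
    by_contra h
    rw [utility_eq_zero_of_unmatched h] at hpos
    exact lt_irrefl _ hpos
  obtain ⟨T₀, hT₀, haT₀⟩ := hm
  have hx : ∃ x ∈ T₀.erase (Agent.a i s), redVal q G (Agent.a i s) x ≠ 0 := by
    by_contra h
    push_neg at h
    rw [utility_eq_of_mem hM hT₀ haT₀, Finset.sum_eq_zero h] at hpos
    exact lt_irrefl _ hpos
  obtain ⟨x, hxer, hxval⟩ := hx
  have hxne : x ≠ Agent.a i s := (mem_erase.mp hxer).1
  have hxT₀ : x ∈ T₀ := mem_of_mem_erase hxer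
  have hxnp : ∀ (r : Fin (6*q)) (u : Fin 5), x ≠ Agent.p r u := by
    rintro r u rfl
    exact hxval (redVal_ap r u i s)
  have hg := fun r => gadget_pair hM hstable r
  choose t j σ hTr using hg
  have hinj : Function.Injective (fun r => (j r, σ r)) := by
    intro r r' he
    simp only [Prod.mk.injEq] at he
    by_contra hrr
    have h1 : Agent.a (j r) (σ r) ∈
        ({Agent.p r (t r + 3), Agent.p r (t r + 4), Agent.a (j r) (σ r)} :
          Finset (Agent q)) := by simp
    have h2 : Agent.a (j r) (σ r) ∈
        ({Agent.p r' (t r' + 3), Agent.p r' (t r' + 4), Agent.a (j r') (σ r')} :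
          Finset (Agent q)) := by
      rw [he.1, he.2]; simp
    have hTT := triple_unique hM (hTr r) (hTr r') h1 h2
    have h3 : Agent.p r (t r + 3) ∈
        ({Agent.p r' (t r' + 3), Agent.p r' (t r' + 4), Agent.a (j r') (σ r')} :
          Finset (Agent q)) := by
      rw [← hTT]; simp
    simp only [mem_insert, mem_singleton, Agent.p.injEq] at h3
    rcases h3 with ⟨hrr', _⟩ | ⟨hrr', _⟩ | h3
    · exact hrr hrr'
    · exact hrr hrr'
    · exact nomatch h3
  have havoid : ∀ r, (j r, σ r) ≠ (i, s) := by
    intro r he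
    simp only [Prod.mk.injEq] at he
    have h1 : Agent.a i s ∈
        ({Agent.p r (t r + 3), Agent.p r (t r + 4), Agent.a (j r) (σ r)} :
          Finset (Agent q)) := by
      rw [show Agent.a i s = Agent.a (j r) (σ r) by rw [he.1, he.2]]
      simp
    have hTT := triple_unique hM hT₀ (hTr r) haT₀ h1
    have hx2 := hxT₀
    rw [hTT] at hx2
    simp only [mem_insert, mem_singleton] at hx2
    rcases hx2 with rfl | rfl | rfl
    · exact hxnp _ _ rfl
    · exact hxnp _ _ rfl
    · exact hxne (by rw [he.1, he.2])
  have hcard2 : (univ : Finset (Fin (6*q))).card ≤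
      ((univ : Finset (Fin (3*q) × Fin 2)).erase (i, s)).card := by
    apply Finset.card_le_card_of_injOn (fun r => (j r, σ r))
    · intro r _
      exact mem_erase.mpr ⟨havoid r, mem_univ _⟩
    · exact fun a _ b _ h => hinj h
  rw [card_erase_of_mem (mem_univ _)] at hcard2
  simp only [card_univ, Fintype.card_fin, Fintype.card_prod] at hcard2
  have hq : 0 < q := by
    have := i.isLt
    omega
  omega
end
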